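/- Fix α₀ > 0, β₀ > 0, L > 0, integers K ≥ 1 and M ≥ 1, losses x₁,…,x_K with x_k > L for all k, and θ̄ > 0. Set ω = 1/β₀ + Σ_{k=1}^K log(x_k/L) and let g = K/Σ_{k=1}^K log(x_k/L) be the maximum likelihood estimator of the tail index. Then lim_{ξ→0⁺} √(ξMθ̄/ω) · R_{α₀ − Mξ + K}(2√(ω ξ M θ̄)) = (α₀ + K)/ω, and this limit equals the credibility mixture (1 − Kβ₀/(g + Kβ₀))·α₀β₀ + (Kβ₀/(g + Kβ₀))·g of the prior mean α₀β₀ and the maximum likelihood estimator g. -/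

import Mathlib

open MeasureTheory ProbabilityTheory Filter

/-- Modified Bessel function of the third kind:
`K_ν(z) = (1/2) ∫₀^∞ u^(ν-1) exp(-z(u+1/u)/2) du`. -/
noncomputable def besselK (ν z : ℝ) : ℝ :=
  (1 / 2) * ∫ u in Set.Ioi (0 : ℝ), u ^ (ν - 1) * Real.exp (-(z * (u + 1 / u)) / 2)

/-- The ratio `R_ν(z) = K_{ν+1}(z) / K_ν(z)`. -/
noncomputable def besselR (ν z : ℝ) : ℝ := besselK (ν + 1) z / besselK ν z

open Set Real in
lemma besselK_eq_aux (ν : ℝ) {a : ℝ} (ha : 0 < a) :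
    besselK ν (2 * a) =
      (1 / 2) * a ^ (-ν) *
        ∫ t in Ioi (0 : ℝ), t ^ (ν - 1) * Real.exp (-t - a ^ 2 / t) := by
  unfold besselK
  have key : (∫ u in Ioi (0 : ℝ), u ^ (ν - 1) * Real.exp (-(2 * a * (u + 1 / u)) / 2))
      = a ^ (-ν) * ∫ t in Ioi (0 : ℝ), t ^ (ν - 1) * Real.exp (-t - a ^ 2 / t) := by
    have hsub := integral_comp_mul_left_Ioi
      (fun u : ℝ => u ^ (ν - 1) * Real.exp (-(2 * a * (u + 1 / u)) / 2)) 0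
      (inv_pos.mpr ha)
    simp only [mul_zero, inv_inv, smul_eq_mul] at hsub
    have hstart : (∫ u in Ioi (0 : ℝ), u ^ (ν - 1) * Real.exp (-(2 * a * (u + 1 / u)) / 2))
        = a⁻¹ * ∫ t in Ioi (0 : ℝ),
            (a⁻¹ * t) ^ (ν - 1) * Real.exp (-(2 * a * (a⁻¹ * t + 1 / (a⁻¹ * t))) / 2) := by
      rw [hsub, ← mul_assoc, inv_mul_cancel₀ ha.ne', one_mul]
    rw [hstart]
    have : ∀ t ∈ Ioi (0 : ℝ),
        (a⁻¹ * t) ^ (ν - 1) * Real.exp (-(2 * a * (a⁻¹ * t + 1 / (a⁻¹ * t))) / 2)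
          = a ^ (-(ν - 1)) * (t ^ (ν - 1) * Real.exp (-t - a ^ 2 / t)) := by
      intro t ht
      have ht' : (0 : ℝ) < t := ht
      have h1 : (a⁻¹ * t) ^ (ν - 1) = a ^ (-(ν - 1)) * t ^ (ν - 1) := by
        rw [Real.mul_rpow (inv_nonneg.mpr ha.le) ht'.le, Real.inv_rpow ha.le,
          ← Real.rpow_neg ha.le]
      have h2 : -(2 * a * (a⁻¹ * t + 1 / (a⁻¹ * t))) / 2 = -t - a ^ 2 / t := by
        field_simp
        ring
      rw [h1, h2]; ring
    rw [setIntegral_congr_fun (by exact measurableSet_Ioi) this, integral_const_mul, ← mul_assoc,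
      ← Real.rpow_neg_one a, ← Real.rpow_add ha]
    ring_nf
    congr 2; funext t; ring_nf
  rw [key]; ring

open Set Real in
lemma tendsto_F {l : Filter ℝ} [l.IsCountablyGenerated] {ν c : ℝ → ℝ} {ν₀ : ℝ}
    (hν₀ : 0 < ν₀) (hν : Tendsto ν l (nhds ν₀)) (hc : Tendsto c l (nhds 0))
    (hc0 : ∀ᶠ ξ in l, 0 ≤ c ξ) :
    Tendsto (fun ξ => ∫ t in Ioi (0 : ℝ), t ^ (ν ξ - 1) * Real.exp (-t - c ξ / t)) l
      (nhds (Real.Gamma ν₀)) := by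
  have hG : Real.Gamma ν₀ = ∫ t in Ioi (0 : ℝ), Real.exp (-t) * t ^ (ν₀ - 1) :=
    Real.Gamma_eq_integral hν₀
  rw [hG]
  have hmem : ∀ᶠ ξ in l, ν ξ ∈ Ioo (ν₀ / 2) (3 * ν₀ / 2) :=
    hν (Ioo_mem_nhds (by linarith) (by linarith))
  refine tendsto_integral_filter_of_dominated_convergence
    (fun t => Real.exp (-t) * t ^ (ν₀ / 2 - 1) + Real.exp (-t) * t ^ (3 * ν₀ / 2 - 1))
    ?_ ?_ ?_ ?_
  · filter_upwards with ξ
    refine (ContinuousOn.aestronglyMeasurable ?_ measurableSet_Ioi)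
    exact (continuousOn_id.rpow_const (fun t ht => Or.inl (ne_of_gt ht))).mul
      ((continuousOn_id.neg.sub
        (continuousOn_const.div continuousOn_id (fun t ht => ne_of_gt ht))).rexp)
  · filter_upwards [hmem, hc0] with ξ hξ hcξ
    filter_upwards [ae_restrict_mem measurableSet_Ioi] with t ht
    have ht' : (0 : ℝ) < t := ht
    have hnn : 0 ≤ t ^ (ν ξ - 1) * Real.exp (-t - c ξ / t) :=
      mul_nonneg (Real.rpow_nonneg ht'.le _) (Real.exp_pos _).le
    rw [Real.norm_eq_abs, abs_of_nonneg hnn]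
    have hexp : Real.exp (-t - c ξ / t) ≤ Real.exp (-t) := by
      apply Real.exp_le_exp.mpr
      have : 0 ≤ c ξ / t := div_nonneg hcξ ht'.le
      linarith
    have hpow : t ^ (ν ξ - 1) ≤ t ^ (ν₀ / 2 - 1) + t ^ (3 * ν₀ / 2 - 1) := by
      rcases le_total t 1 with h1 | h1
      · calc t ^ (ν ξ - 1) ≤ t ^ (ν₀ / 2 - 1) :=
              Real.rpow_le_rpow_of_exponent_ge ht' h1 (by linarith [hξ.1])
          _ ≤ _ := le_add_of_nonneg_right (Real.rpow_nonneg ht'.le _)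
      · calc t ^ (ν ξ - 1) ≤ t ^ (3 * ν₀ / 2 - 1) :=
              Real.rpow_le_rpow_of_exponent_le h1 (by linarith [hξ.2])
          _ ≤ _ := le_add_of_nonneg_left (Real.rpow_nonneg ht'.le _)
    calc t ^ (ν ξ - 1) * Real.exp (-t - c ξ / t)
        ≤ (t ^ (ν₀ / 2 - 1) + t ^ (3 * ν₀ / 2 - 1)) * Real.exp (-t) :=
          mul_le_mul hpow hexp (Real.exp_pos _).le
            (by positivity)
      _ = Real.exp (-t) * t ^ (ν₀ / 2 - 1) + Real.exp (-t) * t ^ (3 * ν₀ / 2 - 1) := by ring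
  · exact (Real.GammaIntegral_convergent (by linarith)).add
      (Real.GammaIntegral_convergent (by linarith))
  · filter_upwards [ae_restrict_mem measurableSet_Ioi] with t ht
    have ht' : (0 : ℝ) < t := ht
    have h1 : Tendsto (fun ξ => t ^ (ν ξ - 1)) l (nhds (t ^ (ν₀ - 1))) := by
      simp_rw [Real.rpow_def_of_pos ht']
      exact (Real.continuous_exp.tendsto _).comp
        (tendsto_const_nhds.mul (hν.sub tendsto_const_nhds))
    have h2 : Tendsto (fun ξ => Real.exp (-t - c ξ / t)) l (nhds (Real.exp (-t))) := by
      have : Tendsto (fun ξ => -t - c ξ / t) l (nhds (-t - 0 / t)) :=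
        tendsto_const_nhds.sub (hc.div_const t)
      simpa [Function.comp_def] using (Real.continuous_exp.tendsto _).comp this
    simpa [mul_comm] using h1.mul h2

lemma coef_eq {ω φ : ℝ} (hω : 0 < ω) (hφ : 0 < φ) :
    Real.sqrt (φ / ω) * (Real.sqrt (ω * φ))⁻¹ = ω⁻¹ := by
  rw [← Real.sqrt_inv, ← Real.sqrt_mul (by positivity) _]
  have h : φ / ω * (ω * φ)⁻¹ = (ω⁻¹) ^ 2 := by
    field_simp
  rw [h, Real.sqrt_sq (by positivity)]

set_option maxHeartbeats 1000000 in
theorem pareto_posterior_mean_tendsto_of_noninformative_experts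
    (α₀ β₀ L θbar : ℝ) (hα₀ : 0 < α₀) (hβ₀ : 0 < β₀) (hL : 0 < L) (hθbar : 0 < θbar)
    (K M : ℕ) (hK : 1 ≤ K) (hM : 1 ≤ M) (x : Fin K → ℝ) (hx : ∀ k, L < x k)
    (ω g : ℝ) (hω : ω = 1 / β₀ + ∑ k, Real.log (x k / L))
    (hg : g = K / ∑ k, Real.log (x k / L)) :
    Tendsto (fun ξ : ℝ =>
        Real.sqrt (ξ * M * θbar / ω) *
          besselR (α₀ - M * ξ + K) (2 * Real.sqrt (ω * (ξ * M * θbar))))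
      (nhdsWithin 0 (Set.Ioi 0)) (nhds ((α₀ + K) / ω)) ∧
    (α₀ + K) / ω =
      (1 - K * β₀ / (g + K * β₀)) * (α₀ * β₀) + (K * β₀ / (g + K * β₀)) * g := by
  have hKpos : (0 : ℝ) < K := by exact_mod_cast hK
  have hMpos : (0 : ℝ) < M := by exact_mod_cast hM
  have hS : 0 < ∑ k, Real.log (x k / L) := by
    have : Nonempty (Fin K) := ⟨⟨0, hK⟩⟩
    exact Finset.sum_pos (fun k _ => Real.log_pos ((one_lt_div hL).mpr (hx k)))
      Finset.univ_nonempty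
  have hωpos : 0 < ω := by rw [hω]; positivity
  constructor
  · -- the limit
    set ν₀ : ℝ := α₀ + K with hν₀def
    have hν₀ : 0 < ν₀ := by positivity
    -- tendsto of parameters
    have hξ0 : Tendsto (fun ξ : ℝ => ξ) (nhdsWithin 0 (Set.Ioi 0)) (nhds 0) :=
      (continuous_id.tendsto 0).mono_left nhdsWithin_le_nhds
    have hνt : Tendsto (fun ξ : ℝ => α₀ - M * ξ + K) (nhdsWithin 0 (Set.Ioi 0))
        (nhds ν₀) := by
      have : Tendsto (fun ξ : ℝ => α₀ - M * ξ + K) (nhdsWithin 0 (Set.Ioi 0))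
          (nhds (α₀ - M * 0 + K)) :=
        (tendsto_const_nhds.sub (tendsto_const_nhds.mul hξ0)).add tendsto_const_nhds
      simpa using this
    have hct : Tendsto (fun ξ : ℝ => ω * (ξ * M * θbar)) (nhdsWithin 0 (Set.Ioi 0))
        (nhds 0) := by
      have : Tendsto (fun ξ : ℝ => ω * (ξ * M * θbar)) (nhdsWithin 0 (Set.Ioi 0))
          (nhds (ω * (0 * M * θbar))) :=
        tendsto_const_nhds.mul ((hξ0.mul tendsto_const_nhds).mul tendsto_const_nhds)
      simpa using this
    have hc0 : ∀ᶠ ξ in nhdsWithin (0:ℝ) (Set.Ioi 0), 0 ≤ ω * (ξ * M * θbar) := by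
      filter_upwards [self_mem_nhdsWithin] with ξ hξ
      have : (0:ℝ) < ξ := hξ
      positivity
    have hF1 := tendsto_F (by linarith : (0:ℝ) < ν₀ + 1)
      (by simpa using hνt.add (tendsto_const_nhds (x := (1:ℝ)))) hct hc0
    have hF0 := tendsto_F hν₀ hνt hct hc0
    have hGpos : 0 < Real.Gamma ν₀ := Real.Gamma_pos_of_pos hν₀
    have hlim : Tendsto (fun ξ : ℝ => ω⁻¹ *
        ((∫ t in Set.Ioi (0:ℝ), t ^ ((α₀ - M * ξ + K + 1) - 1) *
            Real.exp (-t - ω * (ξ * M * θbar) / t)) /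
          (∫ t in Set.Ioi (0:ℝ), t ^ ((α₀ - M * ξ + K) - 1) *
            Real.exp (-t - ω * (ξ * M * θbar) / t))))
        (nhdsWithin 0 (Set.Ioi 0)) (nhds ((α₀ + K) / ω)) := by
      have := tendsto_const_nhds (x := ω⁻¹) (f := nhdsWithin (0:ℝ) (Set.Ioi 0)) |>.mul
        (hF1.div hF0 hGpos.ne')
      have heq : ω⁻¹ * (Real.Gamma (ν₀ + 1) / Real.Gamma ν₀) = (α₀ + K) / ω := by
        rw [Real.Gamma_add_one hν₀.ne', mul_div_assoc, div_self hGpos.ne', mul_one,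
          hν₀def]
        ring
      rw [← heq]
      exact this
    refine hlim.congr' ?_
    filter_upwards [self_mem_nhdsWithin] with ξ hξ
    have hξpos : (0:ℝ) < ξ := hξ
    set φ : ℝ := ξ * M * θbar with hφdef
    have hφpos : 0 < φ := by positivity
    have hapos : 0 < Real.sqrt (ω * φ) := Real.sqrt_pos.mpr (by positivity)
    set a : ℝ := Real.sqrt (ω * φ) with hadef
    have ha2 : a ^ 2 = ω * φ := Real.sq_sqrt (by positivity)
    set ν : ℝ := α₀ - M * ξ + K with hνdef
    have hK1 := besselK_eq_aux (ν + 1) hapos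
    have hK0 := besselK_eq_aux ν hapos
    simp only [ha2] at hK1 hK0
    rw [besselR, hK1, hK0]
    set F1 := ∫ t in Set.Ioi (0:ℝ), t ^ (ν + 1 - 1) * Real.exp (-t - ω * φ / t)
    set F0 := ∫ t in Set.Ioi (0:ℝ), t ^ (ν - 1) * Real.exp (-t - ω * φ / t)
    have halg : ∀ s c₁ c₀ f1 f0 : ℝ,
        s * ((1 / 2 * c₁ * f1) / (1 / 2 * c₀ * f0)) = (s * (c₁ / c₀)) * (f1 / f0) := by
      intro s c₁ c₀ f1 f0
      rw [mul_div_mul_comm, mul_div_mul_left _ _ (by norm_num : (1:ℝ)/2 ≠ 0)]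
      ring
    have hsplit : Real.sqrt (φ / ω) * ((1 / 2 * a ^ (-(ν + 1)) * F1) / (1 / 2 * a ^ (-ν) * F0))
        = (Real.sqrt (φ / ω) * (a ^ (-(ν + 1)) / a ^ (-ν))) * (F1 / F0) := halg _ _ _ _ _
    have hratio : a ^ (-(ν + 1)) / a ^ (-ν) = a⁻¹ := by
      rw [show -(ν + 1) = -ν + -1 by ring, Real.rpow_add hapos, Real.rpow_neg_one]
      have := (Real.rpow_pos_of_pos hapos (-ν)).ne'
      field_simp
    have hcoef : Real.sqrt (φ / ω) * a⁻¹ = ω⁻¹ := coef_eq hωpos hφpos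
    rw [hsplit, hratio, hcoef]
  · -- the credibility-mixture identity
    subst hω hg
    set S : ℝ := ∑ k, Real.log (x k / L)
    have hden : (K:ℝ) / S + K * β₀ > 0 := by positivity
    field_simp
    ring
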